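/- For all n ∈ ℕ and all a,b ∈ [n], the (a,b)-plaid is a peaceful battle on the 2n×2n torus 𝕋_{2n}: the sets B = B₁∪B₂∪B₃ and W of the (a,b)-plaid are disjoint, and every hyperedge e of 𝕋_{2n} satisfies e∩B = ∅ or e∩W = ∅. -/

import Mathlib

open Finset

/-- The cells of the `n × n` board, i.e. `[n] × [n]` with `[n] = {1, …, n}`. -/
def cells (n : ℕ) : Finset (ℕ × ℕ) := Finset.Icc 1 n ×ˢ Finset.Icc 1 n

/-- The hyperedges of the `n × n` torus `𝕋_n`: rows, columns, `ℤ_n`-diagonals and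
`ℤ_n`-skew-diagonals. -/
def torusEdges (n : ℕ) : Set (Finset (ℕ × ℕ)) :=
  {e | (∃ i ∈ Finset.Icc 1 n, e = (cells n).filter (fun p => p.1 = i)) ∨
       (∃ j ∈ Finset.Icc 1 n, e = (cells n).filter (fun p => p.2 = j)) ∨
       (∃ k : ZMod n, e = (cells n).filter (fun p => (p.1 : ZMod n) - (p.2 : ZMod n) = k)) ∨
       (∃ k : ZMod n, e = (cells n).filter (fun p => (p.1 : ZMod n) + (p.2 : ZMod n) = k))}

/-- A peaceful battle on the `n × n` torus `𝕋_n`: disjoint sets `B, W ⊆ [n] × [n]` such that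
no hyperedge meets both. -/
def IsPeacefulTorus (n : ℕ) (B W : Finset (ℕ × ℕ)) : Prop :=
  B ⊆ cells n ∧ W ⊆ cells n ∧ Disjoint B W ∧
    ∀ e ∈ torusEdges n, e ∩ B = ∅ ∨ e ∩ W = ∅

/-- `t n` : the largest `m` so that some peaceful battle `(B, W)` on `𝕋_n` has `|B| = |W| = m`. -/
noncomputable def t (n : ℕ) : ℕ :=
  sSup {m : ℕ | ∃ B W : Finset (ℕ × ℕ), IsPeacefulTorus n B W ∧ B.card = m ∧ W.card = m}

/-- The black squares `B₁ ∪ B₂ ∪ B₃` of the `(a,b)`-plaid on the `N × N` board: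
`B₁ = {(i,j) ∈ [a] × [b] : i + j odd}`,
`B₂ = {(i,j) : i ∈ [a], b+1 ≤ j ≤ N, i even, j odd}`,
`B₃ = {(i,j) : a+1 ≤ i ≤ N, j ∈ [b], i odd, j even}`. -/
def plaidB (N a b : ℕ) : Finset (ℕ × ℕ) :=
  (cells N).filter (fun p =>
    (p.1 ≤ a ∧ p.2 ≤ b ∧ Odd (p.1 + p.2)) ∨
    (p.1 ≤ a ∧ b + 1 ≤ p.2 ∧ Even p.1 ∧ Odd p.2) ∨
    (a + 1 ≤ p.1 ∧ p.2 ≤ b ∧ Odd p.1 ∧ Even p.2))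

/-- The white squares of the `(a,b)`-plaid on the `N × N` board:
`W = {(i,j) : a+1 ≤ i ≤ N, b+1 ≤ j ≤ N, i and j both even}`. -/
def plaidW (N a b : ℕ) : Finset (ℕ × ℕ) :=
  (cells N).filter (fun p => a + 1 ≤ p.1 ∧ b + 1 ≤ p.2 ∧ Even p.1 ∧ Even p.2)

/-- For all `n ∈ ℕ` and `a, b ∈ [n]`, the `(a,b)`-plaid is a peaceful battle on the
`2n × 2n` torus `𝕋_{2n}`. -/
lemma parity_sub {m : ℕ} {x1 x2 y1 y2 : ℕ}
    (h : (x1 : ZMod (2*m)) - x2 = (y1 : ZMod (2*m)) - y2) :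
    (x1 + x2) % 2 = (y1 + y2) % 2 := by
  have h2 := congrArg (ZMod.castHom (dvd_mul_right 2 m) (ZMod 2)) h
  simp only [map_sub, map_natCast] at h2
  have hx : ∀ u v : ZMod 2, u - v = u + v := by decide
  rw [hx, hx] at h2
  have : ((x1 + x2 : ℕ) : ZMod 2) = ((y1 + y2 : ℕ) : ZMod 2) := by push_cast; exact h2
  exact (ZMod.natCast_eq_natCast_iff' _ _ _).1 this

lemma parity_add {m : ℕ} {x1 x2 y1 y2 : ℕ}
    (h : (x1 : ZMod (2*m)) + x2 = (y1 : ZMod (2*m)) + y2) :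
    (x1 + x2) % 2 = (y1 + y2) % 2 := by
  have h2 := congrArg (ZMod.castHom (dvd_mul_right 2 m) (ZMod 2)) h
  simp only [map_add, map_natCast] at h2
  have : ((x1 + x2 : ℕ) : ZMod 2) = ((y1 + y2 : ℕ) : ZMod 2) := by push_cast; exact h2
  exact (ZMod.natCast_eq_natCast_iff' _ _ _).1 this

theorem plaid_isPeaceful (n a b : ℕ) (ha : a ∈ Finset.Icc 1 n) (hb : b ∈ Finset.Icc 1 n) :
    IsPeacefulTorus (2 * n) (plaidB (2 * n) a b) (plaidW (2 * n) a b) := by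
  refine ⟨Finset.filter_subset _ _, Finset.filter_subset _ _, ?_, ?_⟩
  · rw [Finset.disjoint_left]
    intro p hp hp'
    simp only [plaidB, plaidW, Finset.mem_filter, Nat.odd_iff, Nat.even_iff] at hp hp'
    obtain ⟨-, hB⟩ := hp
    obtain ⟨-, hW⟩ := hp'
    omega
  · intro e he
    by_contra hcon
    push_neg at hcon
    obtain ⟨hB, hW⟩ := hcon
    obtain ⟨x, hx⟩ := hB
    obtain ⟨y, hy⟩ := hW
    rw [Finset.mem_inter] at hx hy
    obtain ⟨hxe, hxB⟩ := hx
    obtain ⟨hye, hyW⟩ := hy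
    simp only [plaidB, plaidW, Finset.mem_filter, Nat.odd_iff, Nat.even_iff] at hxB hyW
    obtain ⟨-, hxB⟩ := hxB
    obtain ⟨-, hyW⟩ := hyW
    rcases he with ⟨i, -, rfl⟩ | ⟨j, -, rfl⟩ | ⟨k, rfl⟩ | ⟨k, rfl⟩
    · simp only [Finset.mem_filter] at hxe hye
      omega
    · simp only [Finset.mem_filter] at hxe hye
      omega
    · simp only [Finset.mem_filter] at hxe hye
      have := parity_sub (hxe.2.trans hye.2.symm)
      omega
    · simp only [Finset.mem_filter] at hxe hye
      have := parity_add (hxe.2.trans hye.2.symm)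
      omega
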